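/- Suppose u : [0,∞) × [0,∞) → ℝ is a C² solution of the sine-Gordon equation u_{tt} − u_{xx} + sin u = 0. Then the 1-form ω₁ = −(i/4)(−(u_x+u_t)²/2 + cos u − 1) dx + (i/4)((u_x+u_t)²/2 + cos u − 1) dt is closed, i.e. ∂_t[−(−(u_x+u_t)²/2 + cos u − 1)] = ∂_x[(u_x+u_t)²/2 + cos u − 1]. -/

import Mathlib

open Set

/-- For a `C²` solution of sine-Gordon `u_{tt} − u_{xx} + sin u = 0` on the
quarter plane, the one-form `ω₁` is closed:
`∂_t[−(−(u_x+u_t)²/2 + cos u − 1)] = ∂_x[(u_x+u_t)²/2 + cos u − 1]`. -/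
theorem stmt18 (u : ℝ → ℝ → ℝ)
    (hu : ContDiff ℝ 2 (fun p : ℝ × ℝ => u p.1 p.2))
    (hsg : ∀ x ∈ Ici (0:ℝ), ∀ t ∈ Ici (0:ℝ),
      deriv (fun s => deriv (fun s' => u x s') s) t
        - deriv (fun y => deriv (fun y' => u y' t) y) x
        + Real.sin (u x t) = 0) :
    ∀ x ∈ Ici (0:ℝ), ∀ t ∈ Ici (0:ℝ),
      deriv (fun s =>
          -(-(deriv (fun y => u y s) x + deriv (u x) s) ^ 2 / 2
            + Real.cos (u x s) - 1)) t =
      deriv (fun y =>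
          (deriv (fun y' => u y' t) y + deriv (u y) t) ^ 2 / 2
            + Real.cos (u y t) - 1) x := by
  intro x hx t ht
  set U : ℝ × ℝ → ℝ := fun p => u p.1 p.2 with hUdef
  have hU2 : ContDiff ℝ 2 U := hu
  have hUd : Differentiable ℝ U := hU2.differentiable (by norm_num)
  have hF1 : ContDiff ℝ 1 (fderiv ℝ U) := hU2.fderiv_right (le_refl _)
  set F := fderiv ℝ U with hFdef
  set G := fderiv ℝ F with hGdef
  have hFd : Differentiable ℝ F := hF1.differentiable (by norm_num)
  have hFD : ∀ p, HasFDerivAt U (F p) p := fun p => (hUd p).hasFDerivAt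
  have hGD : ∀ p, HasFDerivAt F (G p) p := fun p => (hFd p).hasFDerivAt
  have symm : ∀ v w, G (x, t) v w = G (x, t) w v := fun v w =>
    second_derivative_symmetric hFD (hGD (x, t)) v w
  have hline1 : ∀ a b : ℝ, HasDerivAt (fun y => (y, b)) ((1:ℝ), (0:ℝ)) a :=
    fun a b => (hasDerivAt_id a).prodMk (hasDerivAt_const a b)
  have hline2 : ∀ a b : ℝ, HasDerivAt (fun s => (a, s)) ((0:ℝ), (1:ℝ)) b :=
    fun a b => (hasDerivAt_const b a).prodMk (hasDerivAt_id b)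
  -- first partials
  have hux : ∀ a b : ℝ, HasDerivAt (fun y => u y b) (F (a, b) (1, 0)) a := fun a b =>
    (hFD (a, b)).comp_hasDerivAt (l := U) a (hline1 a b)
  have hut : ∀ a b : ℝ, HasDerivAt (fun s => u a s) (F (a, b) (0, 1)) b := fun a b =>
    (hFD (a, b)).comp_hasDerivAt (l := U) b (hline2 a b)
  -- second partials
  have hpt : ∀ (v : ℝ × ℝ) (a b : ℝ),
      HasDerivAt (fun s => F (a, s) v) (G (a, b) (0, 1) v) b := by
    intro v a b
    have h1 : HasFDerivAt (fun p => F p v)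
        ((ContinuousLinearMap.apply ℝ ℝ v).comp (G (a, b))) (a, b) :=
      (ContinuousLinearMap.apply ℝ ℝ v).hasFDerivAt.comp _ (hGD (a, b))
    exact h1.comp_hasDerivAt b (hline2 a b)
  have hpx : ∀ (v : ℝ × ℝ) (a b : ℝ),
      HasDerivAt (fun y => F (y, b) v) (G (a, b) (1, 0) v) a := by
    intro v a b
    have h1 : HasFDerivAt (fun p => F p v)
        ((ContinuousLinearMap.apply ℝ ℝ v).comp (G (a, b))) (a, b) :=
      (ContinuousLinearMap.apply ℝ ℝ v).hasFDerivAt.comp _ (hGD (a, b))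
    exact h1.comp_hasDerivAt a (hline1 a b)
  -- sine-Gordon at (x,t) in these terms
  have hsg' : G (x, t) (0, 1) (0, 1) - G (x, t) (1, 0) (1, 0) + Real.sin (u x t) = 0 := by
    have h := hsg x hx t ht
    have e1 : (fun s => deriv (fun s' => u x s') s) = fun s => F (x, s) (0, 1) := by
      funext s; exact (hut x s).deriv
    have e2 : (fun y => deriv (fun y' => u y' t) y) = fun y => F (y, t) (1, 0) := by
      funext y; exact (hux y t).deriv
    rw [e1, e2, (hpt (0,1) x t).deriv, (hpx (1,0) x t).deriv] at h
    exact h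
  have hs : G (x, t) (0, 1) ((1:ℝ), (0:ℝ)) = G (x, t) (1, 0) ((0:ℝ), (1:ℝ)) :=
    symm (0, 1) (1, 0)
  -- rewrite goal functions
  have eL : (fun s =>
      -(-(deriv (fun y => u y s) x + deriv (u x) s) ^ 2 / 2
        + Real.cos (u x s) - 1))
      = fun s => -(-(F (x, s) (1, 0) + F (x, s) (0, 1)) ^ 2 / 2
        + Real.cos (u x s) - 1) := by
    funext s
    rw [(hux x s).deriv, (hut x s).deriv]
  have eR : (fun y =>
      (deriv (fun y' => u y' t) y + deriv (u y) t) ^ 2 / 2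
        + Real.cos (u y t) - 1)
      = fun y => (F (y, t) (1, 0) + F (y, t) (0, 1)) ^ 2 / 2
        + Real.cos (u y t) - 1 := by
    funext y
    rw [(hux y t).deriv, (hut y t).deriv]
  rw [eL, eR]
  have hcosT : HasDerivAt (fun s => Real.cos (u x s))
      (-Real.sin (u x t) * F (x, t) (0, 1)) t := (hut x t).cos
  have hcosX : HasDerivAt (fun y => Real.cos (u y t))
      (-Real.sin (u x t) * F (x, t) (1, 0)) x := (hux x t).cos
  have hL := (((((((hpt (1,0) x t).add (hpt (0,1) x t)).pow 2).neg).div_const 2).add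
      hcosT).sub_const 1).neg
  have hR := (((((hpx (1,0) x t).add (hpx (0,1) x t)).pow 2).div_const 2).add
      hcosX).sub_const 1
  rw [HasDerivAt.deriv (f := fun s => -(-(F (x, s) (1, 0) + F (x, s) (0, 1)) ^ 2 / 2
      + Real.cos (u x s) - 1)) hL, HasDerivAt.deriv (f := fun y => (F (y, t) (1, 0)
      + F (y, t) (0, 1)) ^ 2 / 2 + Real.cos (u y t) - 1) hR]
  push_cast [Pi.add_apply]
  ring_nf
  linear_combination (F (x, t) (1, 0) + F (x, t) (0, 1)) * hsg'
    + (F (x, t) (1, 0) + F (x, t) (0, 1)) * hs
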